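/- Let x, y be nonzero vectors in a Hilbert space and T = x ⊗ y. Then the n-th mean transform iterate is T̂^{(n)} = (1/2ⁿ)(x + (2ⁿ − 1)(⟨x,y⟩/‖y‖²) y) ⊗ y, and consequently T̂^{(n)} converges in norm to the operator (⟨x,y⟩/‖y‖²)(y ⊗ y), with mean limit ℓ(T) = |⟨x,y⟩| = r(T). -/

import Mathlib

set_option synthInstance.maxHeartbeats 1000000
set_option maxHeartbeats 1000000

open ContinuousLinearMap Filter Topology

structure PolarDecomp {H : Type*} [NormedAddCommGroup H] [InnerProductSpace ℂ H]
    [CompleteSpace H] (T : H →L[ℂ] H) where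
  V : H →L[ℂ] H
  R : H →L[ℂ] H
  posR : R.IsPositive
  sqR : R * R = adjoint T * T
  partIso : V * adjoint V * V = V
  kerV : LinearMap.ker (V : H →ₗ[ℂ] H) = LinearMap.ker (T : H →ₗ[ℂ] H)
  factor : T = V * R

noncomputable def PolarDecomp.mean {H : Type*} [NormedAddCommGroup H] [InnerProductSpace ℂ H]
    [CompleteSpace H] {T : H →L[ℂ] H} (P : PolarDecomp T) : H →L[ℂ] H :=
  (2⁻¹ : ℂ) • (P.V * P.R + P.R * P.V)


open scoped Classical in
noncomputable def meanTransform {H : Type*} [NormedAddCommGroup H] [InnerProductSpace ℂ H]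
    [CompleteSpace H] (T : H →L[ℂ] H) : H →L[ℂ] H :=
  if h : Nonempty (PolarDecomp T) then h.some.mean else 0


noncomputable def rankOne {H : Type*} [NormedAddCommGroup H] [InnerProductSpace ℂ H]
    (x y : H) : H →L[ℂ] H :=
  (ContinuousLinearMap.toSpanSingleton ℂ x).comp (innerSL ℂ y)

section aux

variable {H : Type*} [NormedAddCommGroup H] [InnerProductSpace ℂ H]

lemma rankOne_apply (x y u : H) : rankOne x y u = (inner ℂ y u : ℂ) • x := rfl

lemma rankOne_mul (x y z w : H) :
    rankOne x y * rankOne z w = (inner ℂ y z : ℂ) • rankOne x w := by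
  ext u
  simp [rankOne_apply, ContinuousLinearMap.mul_apply, inner_smul_right, smul_smul, mul_comm]

lemma rankOne_smul_left (c : ℂ) (x y : H) : rankOne (c • x) y = c • rankOne x y := by
  ext u
  simp [rankOne_apply, smul_smul, mul_comm]

lemma rankOne_sub_left (x x' y : H) : rankOne (x - x') y = rankOne x y - rankOne x' y := by
  ext u; simp [rankOne_apply, smul_sub]

variable [CompleteSpace H]

lemma rankOne_adjoint (x y : H) : adjoint (rankOne x y) = rankOne y x := by
  symm
  rw [eq_adjoint_iff]
  intro u v
  simp [rankOne_apply, inner_smul_left, inner_smul_right, inner_conj_symm, mul_comm]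

end aux


lemma inner_self_c {H : Type*} [NormedAddCommGroup H] [InnerProductSpace ℂ H] (y : H) :
    (inner ℂ y y : ℂ) = ((‖y‖ : ℂ))^2 := by
  exact_mod_cast inner_self_eq_norm_sq_to_K (𝕜 := ℂ) y

section pd

section pd

variable {H : Type*} [NormedAddCommGroup H] [InnerProductSpace ℂ H] [CompleteSpace H]

noncomputable def rankOnePD (x y : H) (hx : x ≠ 0) (hy : y ≠ 0) :
    PolarDecomp (rankOne x y) where
  V := (((‖x‖ : ℂ) * (‖y‖ : ℂ))⁻¹) • rankOne x y
  R := ((‖x‖ : ℂ) / (‖y‖ : ℂ)) • rankOne y y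
  posR := by
    rw [isPositive_iff_complex]
    intro u
    have key : (inner ℂ ((((‖x‖ : ℂ) / (‖y‖ : ℂ)) • rankOne y y) u) u : ℂ)
        = ((‖x‖ / ‖y‖ * Complex.normSq (inner ℂ y u : ℂ) : ℝ) : ℂ) := by
      simp only [ContinuousLinearMap.smul_apply, rankOne_apply, smul_smul, inner_smul_left]
      rw [map_mul, mul_assoc, ← Complex.normSq_eq_conj_mul_self, map_div₀]
      push_cast
      simp [Complex.conj_ofReal]
    rw [key]
    constructor
    · simp
    · simp only [RCLike.re_to_complex, Complex.ofReal_re]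
      have h1 : (0:ℝ) ≤ Complex.normSq (inner ℂ y u : ℂ) := Complex.normSq_nonneg _
      have h2 : (0:ℝ) ≤ ‖x‖ / ‖y‖ := by positivity
      exact mul_nonneg h2 h1
  sqR := by
    have hxc : (‖x‖ : ℂ) ≠ 0 := by simpa using hx
    have hyc : (‖y‖ : ℂ) ≠ 0 := by simpa using hy
    rw [rankOne_adjoint]
    simp only [smul_mul_assoc, mul_smul_comm, rankOne_mul, smul_smul,
      inner_self_c]
    congr 1
    field_simp
  partIso := by
    have hxc : (‖x‖ : ℂ) ≠ 0 := by simpa using hx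
    have hyc : (‖y‖ : ℂ) ≠ 0 := by simpa using hy
    have hadj : adjoint ((((‖x‖ : ℂ) * (‖y‖ : ℂ))⁻¹) • rankOne x y)
        = (((‖x‖ : ℂ) * (‖y‖ : ℂ))⁻¹) • rankOne y x := by
      rw [← star_eq_adjoint, star_smul, star_eq_adjoint, rankOne_adjoint]
      congr 1
      simp [Complex.star_def, Complex.conj_ofReal]
    rw [hadj]
    simp only [smul_mul_assoc, mul_smul_comm, rankOne_mul, smul_smul,
      inner_self_c]
    congr 1
    field_simp
  kerV := by
    ext u
    simp [LinearMap.mem_ker, smul_eq_zero, norm_eq_zero, hx, hy]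
  factor := by
    have hxc : (‖x‖ : ℂ) ≠ 0 := by simpa using hx
    have hyc : (‖y‖ : ℂ) ≠ 0 := by simpa using hy
    simp only [smul_mul_assoc, mul_smul_comm, rankOne_mul, smul_smul,
      inner_self_c]
    nth_rewrite 1 [show rankOne x y = (1:ℂ) • rankOne x y from (one_smul ℂ _).symm]
    congr 1
    field_simp

end pd

section mean

variable {H : Type*} [NormedAddCommGroup H] [InnerProductSpace ℂ H] [CompleteSpace H]

lemma PolarDecomp.R_unique {T : H →L[ℂ] H} (P Q : PolarDecomp T) : P.R = Q.R := by
  have h1 : CFC.sqrt (adjoint T * T) = P.R :=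
    CFC.sqrt_unique P.sqR ((nonneg_iff_isPositive P.R).2 P.posR)
  have h2 : CFC.sqrt (adjoint T * T) = Q.R :=
    CFC.sqrt_unique Q.sqR ((nonneg_iff_isPositive Q.R).2 Q.posR)
  rw [← h1, h2]

lemma PolarDecomp.mean_rankOne (x y : H) (hx : x ≠ 0) (hy : y ≠ 0)
    (P : PolarDecomp (rankOne x y)) :
    P.mean = rankOne ((2⁻¹ : ℂ) • (x + ((inner ℂ y x : ℂ) / (‖y‖ : ℂ) ^ 2) • y)) y := by
  have hxc : (‖x‖ : ℂ) ≠ 0 := by simpa using hx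
  have hyc : (‖y‖ : ℂ) ≠ 0 := by simpa using hy
  have hR : P.R = ((‖x‖ : ℂ) / (‖y‖ : ℂ)) • rankOne y y :=
    P.R_unique (rankOnePD x y hx hy)
  -- action of V
  have hVy : P.V y = (((‖x‖ : ℂ) * (‖y‖ : ℂ))⁻¹ * (‖y‖ : ℂ) ^ 2) • x := by
    have hRy : P.R ((((‖x‖ : ℂ) * (‖y‖ : ℂ))⁻¹) • y) = y := by
      rw [hR]
      simp only [ContinuousLinearMap.smul_apply, ContinuousLinearMap.map_smul,
        rankOne_apply, inner_self_c, smul_smul]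
      rw [show ((‖x‖:ℂ) / (‖y‖:ℂ) * (((‖x‖:ℂ) * (‖y‖:ℂ))⁻¹ * (‖y‖:ℂ)^2)) = 1 by
        field_simp]
      rw [one_smul]
    calc P.V y = P.V (P.R ((((‖x‖ : ℂ) * (‖y‖ : ℂ))⁻¹) • y)) := by rw [hRy]
    _ = (P.V * P.R) ((((‖x‖ : ℂ) * (‖y‖ : ℂ))⁻¹) • y) := rfl
    _ = rankOne x y ((((‖x‖ : ℂ) * (‖y‖ : ℂ))⁻¹) • y) := by rw [← P.factor]
    _ = (((‖x‖ : ℂ) * (‖y‖ : ℂ))⁻¹ * (‖y‖ : ℂ) ^ 2) • x := by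
      rw [rankOne_apply, inner_smul_right, inner_self_c]
  have hV : ∀ u : H, P.V u = ((inner ℂ y u : ℂ) / ((‖x‖ : ℂ) * (‖y‖ : ℂ))) • x := by
    intro u
    set c : ℂ := (inner ℂ y u : ℂ) / (‖y‖ : ℂ) ^ 2 with hc
    have hw : (inner ℂ y (u - c • y) : ℂ) = 0 := by
      rw [inner_sub_right, inner_smul_right, inner_self_c, hc]
      field_simp
      ring
    have hwker : u - c • y ∈ LinearMap.ker (P.V : H →ₗ[ℂ] H) := by
      rw [P.kerV, LinearMap.mem_ker, ContinuousLinearMap.coe_coe, rankOne_apply, hw, zero_smul]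
    have hVw : P.V (u - c • y) = 0 := hwker
    have hu : u = c • y + (u - c • y) := by abel
    rw [hu, map_add, ContinuousLinearMap.map_smul, hVw, add_zero, hVy, smul_smul]
    congr 1
    rw [hc]
    field_simp
    rw [add_sub_cancel]
  -- conclude
  ext u
  have hfac : P.V (P.R u) = rankOne x y u := by
    have : (P.V * P.R) u = rankOne x y u := by rw [← P.factor]
    exact this
  simp only [PolarDecomp.mean, ContinuousLinearMap.smul_apply, ContinuousLinearMap.add_apply,
    ContinuousLinearMap.mul_apply, hfac, hV, hR, rankOne_apply, map_smul,
    ContinuousLinearMap.map_smul, inner_add_right, inner_smul_right,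
    inner_self_c, smul_smul, smul_add]
  match_scalars <;> field_simp <;> ring

lemma meanTransform_rankOne (x y : H) (hx : x ≠ 0) (hy : y ≠ 0) :
    meanTransform (rankOne x y)
      = rankOne ((2⁻¹ : ℂ) • (x + ((inner ℂ y x : ℂ) / (‖y‖ : ℂ) ^ 2) • y)) y := by
  have hne : Nonempty (PolarDecomp (rankOne x y)) := ⟨rankOnePD x y hx hy⟩
  rw [meanTransform, dif_pos hne]
  exact PolarDecomp.mean_rankOne x y hx hy _

end mean

section main

variable {H : Type*} [NormedAddCommGroup H] [InnerProductSpace ℂ H]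

lemma rankOne_add_left (x x' y : H) : rankOne (x + x') y = rankOne x y + rankOne x' y := by
  ext u; simp [rankOne_apply, smul_add]

lemma rankOne_norm (a b : H) : ‖rankOne a b‖ = ‖a‖ * ‖b‖ := by
  by_cases hb : b = 0
  · subst hb
    have h0 : rankOne a (0 : H) = 0 := by ext u; simp [rankOne_apply]
    simp [h0]
  apply le_antisymm
  · refine opNorm_le_bound _ (by positivity) fun u => ?_
    rw [rankOne_apply, norm_smul]
    calc ‖(inner ℂ b u : ℂ)‖ * ‖a‖ ≤ (‖b‖ * ‖u‖) * ‖a‖ := by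
          gcongr
          exact norm_inner_le_norm b u
    _ = ‖a‖ * ‖b‖ * ‖u‖ := by ring
  · have h := (rankOne a b).le_opNorm b
    have hib : ‖(inner ℂ b b : ℂ)‖ = ‖b‖ ^ 2 := by
      rw [inner_self_c, norm_pow, Complex.norm_real, norm_norm]
    rw [rankOne_apply, norm_smul, hib] at h
    have hb' : (0:ℝ) < ‖b‖ := norm_pos_iff.2 hb
    nlinarith [h]

end main

theorem mean_iterates_rank_one {H : Type*} [NormedAddCommGroup H] [InnerProductSpace ℂ H]
    [CompleteSpace H] (x y : H) (hx : x ≠ 0) (hy : y ≠ 0) :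
    (∀ n : ℕ, meanTransform^[n] (rankOne x y) =
      rankOne (((2 : ℂ) ^ n)⁻¹ •
        (x + (((2 : ℂ) ^ n - 1) * ((inner ℂ y x : ℂ) / (‖y‖ : ℂ) ^ 2)) • y)) y) ∧
    Tendsto (fun n : ℕ => meanTransform^[n] (rankOne x y)) atTop
      (nhds (rankOne (((inner ℂ y x : ℂ) / (‖y‖ : ℂ) ^ 2) • y) y)) ∧
    Tendsto (fun n : ℕ => ‖meanTransform^[n] (rankOne x y)‖) atTop
      (nhds (‖(inner ℂ y x : ℂ)‖)) ∧
    spectralRadius ℂ (rankOne x y) = ENNReal.ofReal (‖(inner ℂ y x : ℂ)‖) := by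
  have hyc : (‖y‖ : ℂ) ≠ 0 := by simpa using hy
  set c : ℂ := (inner ℂ y x : ℂ) / (‖y‖ : ℂ) ^ 2 with hc
  -- Part 1
  have part1 : ∀ n : ℕ, meanTransform^[n] (rankOne x y) =
      rankOne (((2:ℂ)^n)⁻¹ • (x + (((2:ℂ)^n - 1) * c) • y)) y := by
    intro n
    induction n with
    | zero => simp
    | succ n ih =>
      have h2n : ((2:ℂ)^n) ≠ 0 := by norm_num
      set xn : H := ((2:ℂ)^n)⁻¹ • (x + (((2:ℂ)^n - 1) * c) • y) with hxn
      have hxnne : xn ≠ 0 := by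
        intro h0
        rw [hxn, smul_eq_zero] at h0
        rcases h0 with h0 | h0
        · exact (inv_ne_zero h2n) h0
        · have hxv : x = -((((2:ℂ)^n - 1) * c) • y) := eq_neg_of_add_eq_zero_left h0
          have hinner : (inner ℂ y x : ℂ) = -(((2:ℂ)^n - 1) * c * (‖y‖:ℂ)^2) := by
            rw [hxv, inner_neg_right, inner_smul_right, inner_self_c]
          have hcy : c * (‖y‖:ℂ)^2 = (inner ℂ y x : ℂ) := by
            rw [hc]; field_simp
          have hceq : c * (‖y‖:ℂ)^2 = -(((2:ℂ)^n - 1) * c * (‖y‖:ℂ)^2) := by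
            rw [hcy, hinner]
          have hc0 : c = 0 := by
            have h3 : ((2:ℂ)^n * c) * (‖y‖:ℂ)^2 = 0 := by linear_combination hceq
            have h4 : (‖y‖:ℂ)^2 ≠ 0 := pow_ne_zero 2 hyc
            have h5 := (mul_eq_zero.mp h3).resolve_right h4
            exact (mul_eq_zero.mp h5).resolve_left h2n
          apply hx
          rw [hxv, hc0]
          simp
      have hin : (inner ℂ y xn : ℂ) = (inner ℂ y x : ℂ) := by
        rw [hxn, inner_smul_right, inner_add_right, inner_smul_right, inner_self_c, hc]
        field_simp
        ring
      rw [Function.iterate_succ_apply', ih, meanTransform_rankOne _ _ hxnne hy]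
      congr 1
      rw [hin, ← hc, hxn]
      match_scalars <;> field_simp <;> ring
  -- identity for limit computation
  have hid : ∀ n : ℕ, rankOne (((2:ℂ)^n)⁻¹ • (x + (((2:ℂ)^n - 1) * c) • y)) y
      = rankOne (c • y) y + ((2:ℂ)^n)⁻¹ • rankOne (x - c • y) y := by
    intro n
    have h2n : ((2:ℂ)^n) ≠ 0 := by norm_num
    rw [← rankOne_smul_left, ← rankOne_add_left]
    congr 1
    match_scalars <;> field_simp <;> ring
  have hfun : (fun n : ℕ => meanTransform^[n] (rankOne x y))
      = fun n : ℕ => rankOne (c • y) y + ((2:ℂ)^n)⁻¹ • rankOne (x - c • y) y := by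
    funext n
    rw [part1 n, hid n]
  have h0 : Tendsto (fun n : ℕ => ((2:ℂ)^n)⁻¹ • rankOne (x - c • y) y) atTop (𝓝 0) := by
    rw [tendsto_zero_iff_norm_tendsto_zero]
    have heq : (fun n : ℕ => ‖((2:ℂ)^n)⁻¹ • rankOne (x - c • y) y‖)
        = fun n : ℕ => (1/2:ℝ)^n * ‖rankOne (x - c • y) y‖ := by
      funext n
      rw [norm_smul, norm_inv, norm_pow, Complex.norm_two]
      rw [div_pow, one_pow, one_div]
    rw [heq]
    simpa using (tendsto_pow_atTop_nhds_zero_of_lt_one (by norm_num : (0:ℝ) ≤ 1/2)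
      (by norm_num : (1/2:ℝ) < 1)).mul_const ‖rankOne (x - c • y) y‖
  have part2 : Tendsto (fun n : ℕ => meanTransform^[n] (rankOne x y)) atTop
      (𝓝 (rankOne (c • y) y)) := by
    rw [hfun]
    simpa using tendsto_const_nhds.add h0
  -- Part 3
  have hnorm : ‖rankOne (c • y) y‖ = ‖(inner ℂ y x : ℂ)‖ := by
    rw [rankOne_norm, norm_smul, hc, norm_div, norm_pow,
      Complex.norm_real, norm_norm]
    have hyr : (‖y‖:ℝ) ≠ 0 := norm_ne_zero_iff.2 hy
    field_simp
  have part3 : Tendsto (fun n : ℕ => ‖meanTransform^[n] (rankOne x y)‖) atTop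
      (𝓝 (‖(inner ℂ y x : ℂ)‖)) := by
    have := part2.norm
    rwa [hnorm] at this
  -- Part 4
  set μ : ℂ := (inner ℂ y x : ℂ) with hμ
  have hTT : rankOne x y * rankOne x y = μ • rankOne x y := by rw [rankOne_mul]
  have hmem : μ ∈ spectrum ℂ (rankOne x y) := by
    rw [spectrum.mem_iff]
    intro hU
    rcases isUnit_iff_exists.mp hU with ⟨B, _, hB2⟩
    have h0' : (algebraMap ℂ (H →L[ℂ] H) μ - rankOne x y) x = 0 := by
      simp [Algebra.algebraMap_eq_smul_one, ContinuousLinearMap.sub_apply, rankOne_apply, hμ]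
    apply hx
    have hbx := congrArg (fun S : H →L[ℂ] H => S x) hB2
    simpa [ContinuousLinearMap.mul_apply, h0'] using hbx.symm
  have hsub : spectrum ℂ (rankOne x y) ⊆ {0, μ} := by
    intro lam hlam
    by_contra hne
    simp only [Set.mem_insert_iff, Set.mem_singleton_iff, not_or] at hne
    obtain ⟨hl0, hlμ⟩ := hne
    rw [spectrum.mem_iff] at hlam
    apply hlam
    have hlμ' : lam - μ ≠ 0 := sub_ne_zero.mpr hlμ
    refine isUnit_iff_exists.mpr ⟨(lam⁻¹ * (lam - μ)⁻¹) • rankOne x y + lam⁻¹ • 1, ?_, ?_⟩ <;>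
    · simp only [Algebra.algebraMap_eq_smul_one, sub_mul, mul_sub, mul_add, add_mul,
        smul_mul_assoc, mul_smul_comm, hTT, smul_smul, mul_one, one_mul, one_smul, smul_sub,
        smul_add]
      match_scalars <;> field_simp <;> ring
  have part4 : spectralRadius ℂ (rankOne x y) = ENNReal.ofReal (‖μ‖) := by
    apply le_antisymm
    · unfold spectralRadius
      refine iSup₂_le fun k hk => ?_
      rcases hsub hk with rfl | rfl
      · simp
      · rw [← coe_nnnorm, ENNReal.ofReal_coe_nnreal]
    · rw [← coe_nnnorm, ENNReal.ofReal_coe_nnreal]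
      unfold spectralRadius
      exact le_iSup₂ (f := fun k (_ : k ∈ spectrum ℂ (rankOne x y)) => (‖k‖₊ : ENNReal)) μ hmem
  exact ⟨part1, part2, part3, part4⟩
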